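/- For an n×n real matrix A, the matrix exponential e^{A t} has all entries nonnegative for every t ≥ 0 if and only if A is a Metzler matrix, i.e., all off-diagonal entries of A are nonnegative. -/

import Mathlib

open scoped Matrix Classical
open MeasureTheory

attribute [local instance] Matrix.linftyOpNormedRing Matrix.linftyOpNormedAlgebra

/-- A nonnegative square matrix is monomial: each row and each column contains
exactly one strictly positive entry, all other entries being zero. -/
def IsMonomial {n : ℕ} (A : Matrix (Fin n) (Fin n) ℝ) : Prop :=
  (∀ i j, 0 ≤ A i j) ∧ (∀ i, ∃! j, 0 < A i j) ∧ (∀ j, ∃! i, 0 < A i j)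

lemma pow_entry_nonneg {n : ℕ} {B : Matrix (Fin n) (Fin n) ℝ} (hB : ∀ i j, 0 ≤ B i j)
    (k : ℕ) : ∀ i j, 0 ≤ (B ^ k) i j := by
  induction k with
  | zero => intro i j; simp [Matrix.one_apply]; positivity
  | succ m ih =>
    intro i j
    rw [pow_succ, Matrix.mul_apply]
    exact Finset.sum_nonneg fun l _ => mul_nonneg (ih i l) (hB l j)

lemma exp_entry_nonneg {n : ℕ} (B : Matrix (Fin n) (Fin n) ℝ) (hB : ∀ i j, 0 ≤ B i j)
    (i j : Fin n) : 0 ≤ NormedSpace.exp B i j := by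
  rw [NormedSpace.exp_eq_tsum ℝ]
  have hsum : Summable (fun k : ℕ => ((Nat.factorial k : ℝ))⁻¹ • B ^ k) :=
    NormedSpace.expSeries_summable' B
  show 0 ≤ (∑' k : ℕ, ((Nat.factorial k : ℝ))⁻¹ • B ^ k) i j
  have h1 : (∑' k : ℕ, ((Nat.factorial k : ℝ))⁻¹ • B ^ k) i j
      = ∑' k : ℕ, (((Nat.factorial k : ℝ))⁻¹ • B ^ k) i j := by
    erw [tsum_apply hsum, tsum_apply]
    exact (Pi.summable.mp hsum) i
  rw [h1]
  refine tsum_nonneg fun k => ?_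
  have h2 : (((Nat.factorial k : ℝ))⁻¹ • B ^ k) i j
      = ((Nat.factorial k : ℝ))⁻¹ * (B ^ k) i j := rfl
  rw [h2]
  exact mul_nonneg (by positivity) (pow_entry_nonneg hB k i j)

lemma exp_smul_one {n : ℕ} (r : ℝ) :
    NormedSpace.exp (r • (1 : Matrix (Fin n) (Fin n) ℝ)) = Real.exp r • 1 := by
  have h1 : r • (1 : Matrix (Fin n) (Fin n) ℝ) = Matrix.diagonal (fun _ => r) := by
    ext i j
    simp [Matrix.diagonal_apply, Matrix.one_apply, Matrix.smul_apply]
  rw [h1, Matrix.exp_diagonal]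
  ext i j
  simp only [Matrix.diagonal_apply, Matrix.smul_apply, Matrix.one_apply, Pi.coe_exp,
    Real.exp_eq_exp_ℝ]
  split <;> simp

theorem exp_nonneg_iff_metzler (n : ℕ) (A : Matrix (Fin n) (Fin n) ℝ) :
    (∀ t : ℝ, 0 ≤ t → ∀ i j, 0 ≤ NormedSpace.exp (t • A) i j) ↔
      (∀ i j, i ≠ j → 0 ≤ A i j) := by
  constructor
  · -- forward: differentiate at 0
    intro h i j hij
    set f : ℝ → ℝ := fun t => NormedSpace.exp (t • A) i j with hf
    -- derivative of exp (t • A) at t = 0 is A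
    have hd : HasDerivAt (fun u : ℝ => NormedSpace.exp (u • A))
        (NormedSpace.exp ((0:ℝ) • A) * A) 0 := hasDerivAt_exp_smul_const A 0
    have hval : NormedSpace.exp ((0:ℝ) • A) * A = A := by
      simp [NormedSpace.exp_zero]
    rw [hval] at hd
    -- compose with entry evaluation, a continuous linear map
    let L : Matrix (Fin n) (Fin n) ℝ →ₗ[ℝ] ℝ :=
      { toFun := fun M => M i j
        map_add' := fun M N => rfl
        map_smul' := fun c M => rfl }
    have hdL : HasDerivAt f (A i j) 0 := by
      have := (L.toContinuousLinearMap.hasFDerivAt (x := NormedSpace.exp ((0:ℝ) • A))).comp_hasDerivAt 0 hd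
      exact this
    have hdw : HasDerivWithinAt f (A i j) (Set.Ioi 0) 0 := hdL.hasDerivWithinAt
    rw [hasDerivWithinAt_iff_tendsto_slope] at hdw
    have hset : Set.Ioi (0:ℝ) \ {0} = Set.Ioi 0 :=
      Set.diff_singleton_eq_self (by simp)
    rw [hset] at hdw
    refine ge_of_tendsto hdw ?_
    filter_upwards [self_mem_nhdsWithin] with t ht
    have ht' : (0:ℝ) < t := ht
    have hf0 : f 0 = 0 := by
      simp [hf, NormedSpace.exp_zero, Matrix.one_apply, hij]
    rw [slope_def_field, hf0]
    have := h t ht'.le i j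
    rw [sub_zero, sub_zero]
    positivity
  · -- backward: shift by a multiple of the identity
    intro hA t ht i j
    set c : ℝ := ∑ k, |A k k| with hc
    have hc0 : 0 ≤ c := Finset.sum_nonneg fun k _ => abs_nonneg _
    have hB : ∀ i j, 0 ≤ (A + c • (1 : Matrix (Fin n) (Fin n) ℝ)) i j := by
      intro a b
      by_cases hab : a = b
      · subst hab
        have h1 : |A a a| ≤ c :=
          Finset.single_le_sum (fun k _ => abs_nonneg (A k k)) (Finset.mem_univ a)
        have := neg_abs_le (A a a)
        simp [Matrix.add_apply, Matrix.smul_apply, Matrix.one_apply]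
        linarith
      · simp [Matrix.add_apply, Matrix.smul_apply, Matrix.one_apply, hab]
        exact hA a b hab
    set B : Matrix (Fin n) (Fin n) ℝ := A + c • 1 with hBdef
    have hcomm : Commute (t • A) ((t * c) • (1 : Matrix (Fin n) (Fin n) ℝ)) := by
      apply Commute.smul_left
      apply Commute.smul_right
      exact Commute.one_right _
    have hsplit : t • B = t • A + (t * c) • (1 : Matrix (Fin n) (Fin n) ℝ) := by
      rw [hBdef, smul_add, smul_smul]
    have hexp : NormedSpace.exp (t • B)
        = NormedSpace.exp (t • A) * NormedSpace.exp ((t * c) • (1 : Matrix (Fin n) (Fin n) ℝ)) := by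
      rw [hsplit]; exact NormedSpace.exp_add_of_commute hcomm
    have hexp1 : NormedSpace.exp ((t * c) • (1 : Matrix (Fin n) (Fin n) ℝ))
        = Real.exp (t * c) • 1 := exp_smul_one (t * c)
    have key : NormedSpace.exp (t • A)
        = Real.exp (-(t * c)) • NormedSpace.exp (t • B) := by
      rw [hexp, hexp1, mul_smul_comm, mul_one, smul_smul, ← Real.exp_add]
      simp
    rw [key]
    have hBt : ∀ a b, 0 ≤ (t • B) a b := fun a b =>
      mul_nonneg ht (hB a b)
    have := exp_entry_nonneg (t • B) hBt i j
    have hE : (Real.exp (-(t * c)) • NormedSpace.exp (t • B)) i j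
        = Real.exp (-(t * c)) * NormedSpace.exp (t • B) i j := rfl
    rw [hE]
    positivity
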